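/- The SC interleaver π defined by π(m, l) = (π_{l'}^{out}(π_l^{in}(m)), l') with l' = (l - (⌊π_l^{in}(m)/2⌋ mod W)) mod L is a bijection from M × L onto itself, where M = {0,...,M-1} and L = {0,...,L-1}. -/
import Mathlib


/-- The SC interleaver π(m,l) = (π_{l'}^{out}(π_l^{in}(m)), l') with
l' = (l - (⌊π_l^{in}(m)/2⌋ mod W)) mod L is a bijection of {0,…,M-1} × {0,…,L-1},
where each π_l^{in} is a permutation of {0,…,M-1} and each π_l^{out} is a
pair-preserving (constrained) permutation of {0,…,M-1}. -/
theorem stmt3 (M L W : ℕ) (hM : Even M) (hW : 1 ≤ W) (hL : 1 ≤ L) [NeZero L]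
    (πin : ZMod L → Equiv.Perm (Fin M)) (πout : ZMod L → Equiv.Perm (Fin M))
    (hconstr : ∀ l (a b : Fin M), (a : ℕ) / 2 = (b : ℕ) / 2 →
      ((πout l a : ℕ)) / 2 = ((πout l b : ℕ)) / 2) :
    Function.Bijective (fun p : Fin M × ZMod L =>
      let m₁ : Fin M := πin p.2 p.1
      let l' : ZMod L := p.2 - (((m₁ : ℕ) / 2) % W : ℕ)
      ((πout l' m₁, l') : Fin M × ZMod L)) := by
  apply Finite.injective_iff_bijective.mp
  intro p q h
  simp only [Prod.mk.injEq] at h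
  obtain ⟨h1, h2⟩ := h
  -- the second components of the outputs agree
  set c₁ : ZMod L := (((((πin p.2 p.1 : Fin M) : ℕ) / 2) % W : ℕ) : ZMod L) with hc₁
  set c₂ : ZMod L := (((((πin q.2 q.1 : Fin M) : ℕ) / 2) % W : ℕ) : ZMod L) with hc₂
  have hl' : p.2 - c₁ = q.2 - c₂ := h2
  have hm : πin p.2 p.1 = πin q.2 q.1 := by
    have := h1
    rw [hl'] at this
    exact (πout (q.2 - c₂)).injective this
  have hc : c₁ = c₂ := by rw [hc₁, hc₂, hm]
  have hl : p.2 = q.2 := by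
    have := hl'
    rw [hc] at this
    exact sub_left_injective this
  have hm' : p.1 = q.1 := by
    rw [hl] at hm
    exact (πin q.2).injective hm
  exact Prod.ext hm' hl
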